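/- Let f : {−1,1}^n → {−1,1} be computable by a decision tree with t leaves. Then for every τ > 0, Σ_{S : |S| ≥ log₂(t²/τ)} \hat{f}(S)² ≤ τ, where \hat{f}(S) are the Fourier coefficients of f under the uniform distribution. -/

import Mathlib

open Finset

/-- Binary decision trees over n Boolean variables with ±1 leaves. -/
inductive DTree (n : ℕ) : Type
  | leaf (b : Bool) : DTree n
  | node (i : Fin n) (l r : DTree n) : DTree n

namespace DTree

/-- Evaluation of a decision tree, with leaves taking values ±1. -/
def eval {n : ℕ} : DTree n → (Fin n → Bool) → ℝ
  | leaf b, _ => if b then 1 else -1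
  | node i l r, x => if x i then l.eval x else r.eval x

/-- Number of leaves. -/
def leaves {n : ℕ} : DTree n → ℕ
  | leaf _ => 1
  | node _ l r => l.leaves + r.leaves

/-- Depth. -/
def depth {n : ℕ} : DTree n → ℕ
  | leaf _ => 0
  | node _ l r => max l.depth r.depth + 1

end DTree

/-- Fourier coefficient of f : {−1,1}^n → ℝ under the uniform distribution,
with Boolean b encoding the point (b = true ↦ 1, b = false ↦ −1). -/
noncomputable def fourierU {n : ℕ} (f : (Fin n → Bool) → ℝ) (S : Finset (Fin n)) : ℝ :=
  (∑ x : Fin n → Bool, f x * ∏ i ∈ S, (if x i then (1 : ℝ) else -1)) / 2 ^ n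

namespace DTProof
open Finset

variable {n : ℕ}

/-- Per-coordinate indicator factor. -/
noncomputable def fac (o : Option Bool) (b : Bool) : ℝ :=
  match o with
  | none => 1
  | some s => if b = s then 1 else 0

/-- Indicator of a partial assignment. -/
noncomputable def ind (ρ : Fin n → Option Bool) (x : Fin n → Bool) : ℝ :=
  ∏ i, fac (ρ i) (x i)

lemma ind_eq_zero (ρ : Fin n → Option Bool) (x : Fin n → Bool) {i : Fin n} {s : Bool}
    (h : ρ i = some s) (hx : x i ≠ s) : ind ρ x = 0 := by
  apply Finset.prod_eq_zero (Finset.mem_univ i)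
  simp [h, fac, hx]

lemma ind_update (ρ : Fin n → Option Bool) (i : Fin n) (s : Bool) (h : ρ i = none)
    (x : Fin n → Bool) :
    ind (Function.update ρ i (some s)) x = (if x i = s then (1:ℝ) else 0) * ind ρ x := by
  unfold ind
  rw [Finset.prod_eq_mul_prod_sdiff_singleton_of_mem (Finset.mem_univ i),
      Finset.prod_eq_mul_prod_sdiff_singleton_of_mem (Finset.mem_univ i)
        (fun j => fac (ρ j) (x j))]
  have h1 : ∀ j ∈ Finset.univ \ {i}, fac (Function.update ρ i (some s) j) (x j)
      = fac (ρ j) (x j) := by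
    intro j hj
    simp only [Finset.mem_sdiff, Finset.mem_singleton] at hj
    rw [Function.update_of_ne hj.2]
  rw [Finset.prod_congr rfl h1, Function.update_self, h]
  simp only [fac]
  ring

/-- Extend a (value, partial assignment) pair by the constraint x i = s. -/
noncomputable def extend (i : Fin n) (s : Bool) (p : ℝ × (Fin n → Option Bool)) :
    ℝ × (Fin n → Option Bool) :=
  if p.2 i = some s then p
  else if p.2 i = none then (p.1, Function.update p.2 i (some s))
  else (0, p.2)

/-- The leaves of a tree as (value, path-constraints) pairs. -/
noncomputable def paths : DTree n → List (ℝ × (Fin n → Option Bool))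
  | .leaf b => [((if b then (1:ℝ) else -1), fun _ => none)]
  | .node i l r => (paths l).map (extend i true) ++ (paths r).map (extend i false)

lemma paths_length (T : DTree n) : (paths T).length = T.leaves := by
  induction T with
  | leaf b => simp [paths, DTree.leaves]
  | node i l r ihl ihr => simp [paths, DTree.leaves, ihl, ihr]

lemma extend_abs_le (i : Fin n) (s : Bool) (p : ℝ × (Fin n → Option Bool))
    (hp : |p.1| ≤ 1) : |(extend i s p).1| ≤ 1 := by
  unfold extend
  split_ifs <;> simp [hp]

lemma paths_abs_le (T : DTree n) : ∀ p ∈ paths T, |p.1| ≤ 1 := by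
  induction T with
  | leaf b =>
    intro p hp
    simp only [paths, List.mem_singleton] at hp
    subst hp
    rcases b <;> simp
  | node i l r ihl ihr =>
    intro p hp
    simp only [paths, List.mem_append, List.mem_map] at hp
    rcases hp with ⟨q, hq, rfl⟩ | ⟨q, hq, rfl⟩
    · exact extend_abs_le _ _ _ (ihl q hq)
    · exact extend_abs_le _ _ _ (ihr q hq)

lemma extend_term (i : Fin n) (s : Bool) (p : ℝ × (Fin n → Option Bool)) (x : Fin n → Bool) :
    (extend i s p).1 * ind (extend i s p).2 x
      = (if x i = s then (1:ℝ) else 0) * (p.1 * ind p.2 x) := by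
  unfold extend
  by_cases h1 : p.2 i = some s
  · rw [if_pos h1]
    by_cases hx : x i = s
    · simp [hx]
    · rw [ind_eq_zero p.2 x h1 hx]
      simp [hx]
  · rw [if_neg h1]
    by_cases h2 : p.2 i = none
    · rw [if_pos h2, ind_update p.2 i s h2]
      ring
    · rw [if_neg h2]
      obtain ⟨s', hs'⟩ : ∃ s', p.2 i = some s' := Option.ne_none_iff_exists'.mp h2
      by_cases hx : x i = s
      · have hxs : x i ≠ s' := by
          intro hc
          exact h1 (by rw [hs', ← hc, hx])
        rw [ind_eq_zero p.2 x hs' hxs]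
        simp
      · simp [hx]

lemma eval_eq_paths (T : DTree n) (x : Fin n → Bool) :
    T.eval x = ((paths T).map (fun p => p.1 * ind p.2 x)).sum := by
  induction T with
  | leaf b => simp [paths, DTree.eval, ind, fac]
  | node i l r ihl ihr =>
    simp only [paths, List.map_append, List.sum_append, List.map_map]
    have hl : ((paths l).map ((fun p => p.1 * ind p.2 x) ∘ extend i true)).sum
        = (if x i = true then (1:ℝ) else 0) * ((paths l).map (fun p => p.1 * ind p.2 x)).sum := by
      rw [← List.sum_map_mul_left]
      refine congrArg List.sum (List.map_congr_left ?_)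
      intro p _
      exact extend_term i true p x
    have hr : ((paths r).map ((fun p => p.1 * ind p.2 x) ∘ extend i false)).sum
        = (if x i = false then (1:ℝ) else 0) * ((paths r).map (fun p => p.1 * ind p.2 x)).sum := by
      rw [← List.sum_map_mul_left]
      refine congrArg List.sum (List.map_congr_left ?_)
      intro p _
      exact extend_term i false p x
    rw [hl, hr, ← ihl, ← ihr]
    rcases hx : x i <;> simp [DTree.eval, hx]

lemma fourierU_add (f g : (Fin n → Bool) → ℝ) (S : Finset (Fin n)) :
    fourierU (fun x => f x + g x) S = fourierU f S + fourierU g S := by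
  unfold fourierU
  rw [← add_div, ← Finset.sum_add_distrib]
  congr 1
  apply Finset.sum_congr rfl
  intro x _
  ring

lemma fourierU_mul (c : ℝ) (f : (Fin n → Bool) → ℝ) (S : Finset (Fin n)) :
    fourierU (fun x => c * f x) S = c * fourierU f S := by
  unfold fourierU
  rw [← mul_div_assoc, Finset.mul_sum]
  congr 1
  apply Finset.sum_congr rfl
  intro x _
  ring

lemma fourierU_listSum (L : List (ℝ × (Fin n → Option Bool))) (S : Finset (Fin n)) :
    fourierU (fun x => (L.map (fun p => p.1 * ind p.2 x)).sum) S
      = (L.map (fun p => p.1 * fourierU (ind p.2) S)).sum := by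
  induction L with
  | nil => simp [fourierU]
  | cons p L ih =>
    simp only [List.map_cons, List.sum_cons]
    rw [fourierU_add (fun x => p.1 * ind p.2 x)
      (fun x => (L.map (fun p => p.1 * ind p.2 x)).sum) S, fourierU_mul, ih]

/-- Domain of a partial assignment. -/
noncomputable def dom (ρ : Fin n → Option Bool) : Finset (Fin n) :=
  Finset.univ.filter (fun i => ρ i ≠ none)

lemma abs_fourier_ind (ρ : Fin n → Option Bool) (S : Finset (Fin n)) :
    |fourierU (ind ρ) S| = if S ⊆ dom ρ then ((2:ℝ) ^ (dom ρ).card)⁻¹ else 0 := by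
  classical
  set h : Fin n → Bool → ℝ :=
    fun i b => fac (ρ i) b * (if i ∈ S then (if b then (1:ℝ) else -1) else 1) with hh
  have key : (∑ x : Fin n → Bool, ind ρ x * ∏ i ∈ S, (if x i then (1:ℝ) else -1))
      = ∏ i, (h i true + h i false) := by
    have hsum : ∀ x : Fin n → Bool, ind ρ x * ∏ i ∈ S, (if x i then (1:ℝ) else -1)
        = ∏ i, h i (x i) := by
      intro x
      symm
      simp only [hh]
      rw [Finset.prod_mul_distrib, Finset.prod_ite_mem, Finset.univ_inter]
      rfl
    calc (∑ x : Fin n → Bool, ind ρ x * ∏ i ∈ S, (if x i then (1:ℝ) else -1))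
        = ∑ x : Fin n → Bool, ∏ i, h i (x i) := by
          exact Finset.sum_congr rfl (fun x _ => hsum x)
      _ = ∑ x ∈ Fintype.piFinset (fun _ : Fin n => (Finset.univ : Finset Bool)),
            ∏ i, h i (x i) := by rw [Fintype.piFinset_univ]
      _ = ∏ i, ∑ b : Bool, h i b := (Finset.prod_univ_sum _ _).symm
      _ = ∏ i, (h i true + h i false) := by
          exact Finset.prod_congr rfl (fun i _ => Fintype.sum_bool _)
  unfold fourierU
  rw [key, abs_div, abs_of_nonneg (by positivity : (0:ℝ) ≤ 2 ^ n), Finset.abs_prod]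
  have hfac : ∀ i, |h i true + h i false|
      = if ρ i = none then (if i ∈ S then 0 else 2) else 1 := by
    intro i
    simp only [hh]
    rcases hr : ρ i with _ | s
    · by_cases hi : i ∈ S <;> simp [fac, hi, hr] <;> norm_num
    · rcases s <;> by_cases hi : i ∈ S <;> simp [fac, hi, hr] <;> norm_num
  rw [Finset.prod_congr rfl (fun i _ => hfac i)]
  by_cases hS : S ⊆ dom ρ
  · rw [if_pos hS]
    have h2 : ∀ i, (if ρ i = none then (if i ∈ S then (0:ℝ) else 2) else 1)
        = if ρ i = none then 2 else 1 := by
      intro i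
      by_cases hn : ρ i = none
      · have : i ∉ S := by
          intro hi
          have := hS hi
          simp [dom, hn] at this
        simp [hn, this]
      · simp [hn]
    rw [Finset.prod_congr rfl (fun i _ => h2 i), Finset.prod_ite (fun _ => (2:ℝ)) (fun _ => (1:ℝ))]
    simp only [Finset.prod_const, one_pow, mul_one]
    have hle : (dom ρ).card ≤ n := by
      simpa [dom] using Finset.card_le_card (Finset.filter_subset
        (fun i => ρ i ≠ none) (Finset.univ : Finset (Fin n)))
    have hcard : (Finset.univ.filter (fun i => ρ i = none)).card = n - (dom ρ).card := by
      have hpart := Finset.card_filter_add_card_filter_not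
        (s := (Finset.univ : Finset (Fin n))) (fun i => ρ i ≠ none)
      simp only [Finset.card_univ, Fintype.card_fin, not_not] at hpart
      have hdom : (dom ρ).card = (Finset.univ.filter (fun i => ρ i ≠ none)).card := by
        rw [dom]
      omega
    rw [hcard]
    have h3 : (2:ℝ) ^ n = 2 ^ (n - (dom ρ).card) * 2 ^ (dom ρ).card := by
      rw [← pow_add]
      congr 1
      omega
    rw [h3]
    rw [div_mul_cancel_left₀ (ne_of_gt (by positivity : (0:ℝ) < 2 ^ (n - (dom ρ).card)))]
  · rw [if_neg hS]
    obtain ⟨i, hiS, hid⟩ := Finset.not_subset.mp hS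
    have hnone : ρ i = none := by
      by_contra hc
      exact hid (by simp [dom, hc])
    rw [Finset.prod_eq_zero (Finset.mem_univ i) (by simp [hnone, hiS])]
    simp

lemma sum_abs_fourier_ind (ρ : Fin n → Option Bool) :
    ∑ S : Finset (Fin n), |fourierU (ind ρ) S| = 1 := by
  classical
  simp only [abs_fourier_ind]
  rw [show (∑ S : Finset (Fin n), if S ⊆ dom ρ then ((2:ℝ) ^ (dom ρ).card)⁻¹ else 0)
      = ∑ S : Finset (Fin n), if S ∈ (dom ρ).powerset then ((2:ℝ) ^ (dom ρ).card)⁻¹ else 0 by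
    apply Finset.sum_congr rfl; intro S _; simp [Finset.mem_powerset]]
  rw [Finset.sum_ite_mem, Finset.univ_inter, Finset.sum_const, Finset.card_powerset]
  rw [nsmul_eq_mul]
  push_cast
  rw [mul_inv_cancel₀ (by positivity)]

lemma fourier_decomp (T : DTree n) (S : Finset (Fin n)) :
    fourierU T.eval S = ((paths T).map (fun p => p.1 * fourierU (ind p.2) S)).sum := by
  rw [show T.eval = fun x => ((paths T).map (fun p => p.1 * ind p.2 x)).sum from
    funext (eval_eq_paths T), fourierU_listSum]

lemma list_abs_sum_le (L : List ℝ) : |L.sum| ≤ (L.map abs).sum := by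
  induction L with
  | nil => simp
  | cons a L ih =>
    simp only [List.sum_cons, List.map_cons]
    exact le_trans (abs_add_le _ _) (by linarith)

lemma abs_fourier_le (T : DTree n) (S : Finset (Fin n)) :
    |fourierU T.eval S| ≤ (T.leaves : ℝ) * ((2:ℝ) ^ S.card)⁻¹ := by
  rw [fourier_decomp]
  refine le_trans (list_abs_sum_le _) ?_
  rw [List.map_map]
  have hb : ∀ y ∈ (paths T).map (abs ∘ fun p => p.1 * fourierU (ind p.2) S),
      y ≤ ((2:ℝ) ^ S.card)⁻¹ := by
    intro y hy
    simp only [List.mem_map, Function.comp_apply] at hy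
    obtain ⟨p, hp, rfl⟩ := hy
    rw [abs_mul, abs_fourier_ind]
    by_cases hS : S ⊆ dom p.2
    · rw [if_pos hS]
      have h1 : ((2:ℝ) ^ (dom p.2).card)⁻¹ ≤ ((2:ℝ) ^ S.card)⁻¹ := by
        apply inv_anti₀ (by positivity)
        exact pow_le_pow_right₀ (by norm_num) (Finset.card_le_card hS)
      calc |p.1| * ((2:ℝ) ^ (dom p.2).card)⁻¹ ≤ 1 * ((2:ℝ) ^ (dom p.2).card)⁻¹ := by
            apply mul_le_mul_of_nonneg_right (paths_abs_le T p hp) (by positivity)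
        _ ≤ ((2:ℝ) ^ S.card)⁻¹ := by rw [one_mul]; exact h1
    · rw [if_neg hS, mul_zero]; positivity
  have := List.sum_le_card_nsmul _ _ hb
  rw [List.length_map, paths_length, nsmul_eq_mul] at this
  exact this

lemma sum_abs_fourier_le (T : DTree n) :
    ∑ S : Finset (Fin n), |fourierU T.eval S| ≤ (T.leaves : ℝ) := by
  classical
  have h1 : ∀ S : Finset (Fin n), |fourierU T.eval S|
      ≤ ((paths T).map (fun p => |p.1| * |fourierU (ind p.2) S|)).sum := by
    intro S
    rw [fourier_decomp]
    refine le_trans (list_abs_sum_le _) ?_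
    rw [List.map_map]
    apply le_of_eq
    congr 1
    ext p
    simp [abs_mul]
  refine le_trans (Finset.sum_le_sum (fun S _ => h1 S)) ?_
  have hswap : ∀ (L : List (ℝ × (Fin n → Option Bool))),
      ∑ S : Finset (Fin n), (L.map (fun p => |p.1| * |fourierU (ind p.2) S|)).sum
      = (L.map (fun p => |p.1| * ∑ S : Finset (Fin n), |fourierU (ind p.2) S|)).sum := by
    intro L
    induction L with
    | nil => simp
    | cons p L ih => simp [Finset.sum_add_distrib, ih, Finset.mul_sum]
  rw [hswap]
  have hb : ∀ y ∈ (paths T).map (fun p => |p.1| * ∑ S : Finset (Fin n), |fourierU (ind p.2) S|),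
      y ≤ 1 := by
    intro y hy
    simp only [List.mem_map] at hy
    obtain ⟨p, hp, rfl⟩ := hy
    rw [sum_abs_fourier_ind, mul_one]
    exact paths_abs_le T p hp
  have := List.sum_le_card_nsmul _ _ hb
  rw [List.length_map, paths_length, nsmul_eq_mul, mul_one] at this
  exact this

lemma leaves_pos (T : DTree n) : 0 < T.leaves := by
  induction T with
  | leaf b => simp [DTree.leaves]
  | node i l r ihl ihr => simp only [DTree.leaves]; omega

end DTProof

/-- For a function computed by a decision tree with t leaves, the
Fourier mass above degree log₂(t²/τ) is at most τ. -/
theorem dtree_fourier_concentration (n t : ℕ) (T : DTree n) (hT : T.leaves = t)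
    (τ : ℝ) (hτ : 0 < τ) :
    ∑ S ∈ univ.filter (fun S : Finset (Fin n) =>
        Real.logb 2 ((t : ℝ) ^ 2 / τ) ≤ S.card),
      (fourierU T.eval S) ^ 2 ≤ τ := by
  classical
  subst hT
  set t := T.leaves with ht
  have htpos : 0 < t := DTProof.leaves_pos T
  have htR : (0:ℝ) < (t : ℝ) := by exact_mod_cast htpos
  have hq : (0:ℝ) < (t:ℝ)^2 / τ := by positivity
  -- per-term bound on the filtered set
  have hterm : ∀ S ∈ univ.filter (fun S : Finset (Fin n) =>
      Real.logb 2 ((t : ℝ) ^ 2 / τ) ≤ S.card),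
      (fourierU T.eval S) ^ 2 ≤ (τ / t) * |fourierU T.eval S| := by
    intro S hS
    rw [Finset.mem_filter] at hS
    have hpow : (t:ℝ)^2 / τ ≤ (2:ℝ) ^ S.card := by
      calc (t:ℝ)^2 / τ = (2:ℝ) ^ Real.logb 2 ((t:ℝ)^2/τ) :=
            (Real.rpow_logb (by norm_num) (by norm_num) hq).symm
        _ ≤ (2:ℝ) ^ ((S.card : ℝ)) := by
            apply Real.rpow_le_rpow_of_exponent_le (by norm_num) hS.2
        _ = (2:ℝ) ^ S.card := by rw [Real.rpow_natCast]
    have h1 : (t:ℝ) * ((2:ℝ) ^ S.card)⁻¹ ≤ τ / t := by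
      rw [← div_eq_mul_inv, div_le_div_iff₀ (by positivity) htR]
      calc (t:ℝ) * (t:ℝ) = (t:ℝ)^2 := by ring
        _ = ((t:ℝ)^2 / τ) * τ := by field_simp
        _ ≤ (2:ℝ)^S.card * τ := mul_le_mul_of_nonneg_right hpow hτ.le
        _ = τ * (2:ℝ)^S.card := by ring
    calc (fourierU T.eval S) ^ 2 = |fourierU T.eval S| * |fourierU T.eval S| := by
          rw [← sq_abs, sq]
      _ ≤ ((t:ℝ) * ((2:ℝ) ^ S.card)⁻¹) * |fourierU T.eval S| :=
          mul_le_mul_of_nonneg_right (DTProof.abs_fourier_le T S) (abs_nonneg _)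
      _ ≤ (τ / t) * |fourierU T.eval S| :=
          mul_le_mul_of_nonneg_right h1 (abs_nonneg _)
  calc ∑ S ∈ univ.filter (fun S : Finset (Fin n) =>
        Real.logb 2 ((t : ℝ) ^ 2 / τ) ≤ S.card), (fourierU T.eval S) ^ 2
      ≤ ∑ S ∈ univ.filter (fun S : Finset (Fin n) =>
        Real.logb 2 ((t : ℝ) ^ 2 / τ) ≤ S.card), (τ / t) * |fourierU T.eval S| :=
        Finset.sum_le_sum hterm
    _ ≤ ∑ S : Finset (Fin n), (τ / t) * |fourierU T.eval S| := by
        apply Finset.sum_le_sum_of_subset_of_nonneg (Finset.filter_subset _ _)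
        intro S _ _
        positivity
    _ = (τ / t) * ∑ S : Finset (Fin n), |fourierU T.eval S| := by rw [← Finset.mul_sum]
    _ ≤ (τ / t) * (t : ℝ) := by
        apply mul_le_mul_of_nonneg_left (DTProof.sum_abs_fourier_le T) (by positivity)
    _ = τ := by field_simp
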